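/- In the setting of Proposition (VaPoTe invariants): if (b) holds at level N, i.e. φ_N(S_N) ⊆ ⟨π·ν(Q_{≤N}), π^{-N} Q_{>N}⟩, and (c) holds at level N-1, then I_{N+1} = ⟨π^{N+1}·ν(Q_{≤N+1}), Q_{>N+1}⟩. -/

import Mathlib

open MvPowerSeries

namespace TateStmt

variable {n : ℕ} {O : Type*} [CommRing O]

/-- The Tate condition: the (π-adic) valuations of the coefficients tend to infinity. -/
def IsTate (π : O) (f : MvPowerSeries (Fin n) O) : Prop :=
  ∀ N : ℕ, {i : Fin n →₀ ℕ | ¬ π ^ N ∣ MvPowerSeries.coeff i f}.Finite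

/-- The integral Tate algebra `K{X}°`, as a subring of the ring of formal power series
over the valuation ring `O = K°`. -/
def TateAlgebra (n : ℕ) (O : Type*) [CommRing O] (π : O) :
    Subring (MvPowerSeries (Fin n) O) where
  carrier := {f | IsTate π f}
  zero_mem' := by
    intro N
    apply Set.Finite.subset (Set.finite_empty)
    intro i hi
    exact hi (Dvd.intro 0 (by simp))
  one_mem' := by
    intro N
    apply Set.Finite.subset (Set.finite_singleton (0 : Fin n →₀ ℕ))
    intro i hi
    by_contra h
    rw [Set.mem_singleton_iff] at h
    apply hi
    rw [MvPowerSeries.coeff_one, if_neg h]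
    exact Dvd.intro 0 (by simp)
  add_mem' := by
    intro f g hf hg N
    apply Set.Finite.subset ((hf N).union (hg N))
    intro i hi
    by_contra h
    simp only [Set.mem_union, Set.mem_setOf_eq, not_or, not_not] at h
    exact hi (by rw [map_add]; exact dvd_add h.1 h.2)
  neg_mem' := by
    intro f hf N
    apply Set.Finite.subset (hf N)
    intro i hi
    by_contra h
    simp only [Set.mem_setOf_eq, not_not] at h
    exact hi (by rw [map_neg]; exact (dvd_neg).mpr h)
  mul_mem' := by
    intro f g hf hg N
    apply Set.Finite.subset (Set.Finite.add (hf N) (hg N))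
    intro i hi
    by_contra h
    apply hi
    rw [MvPowerSeries.coeff_mul]
    apply Finset.dvd_sum
    intro p hp
    rw [Finset.HasAntidiagonal.mem_antidiagonal] at hp
    by_cases h1 : π ^ N ∣ MvPowerSeries.coeff p.1 f
    · exact Dvd.dvd.mul_right h1 _
    · by_cases h2 : π ^ N ∣ MvPowerSeries.coeff p.2 g
      · exact Dvd.dvd.mul_left h2 _
      · exact absurd (hp ▸ Set.add_mem_add h1 h2) h

/-- Tate monomials `π^a X^i`, identified with pairs `(a, i) ∈ ℕ × ℕ^n`. -/
abbrev TMon (n : ℕ) := ℕ × (Fin n →₀ ℕ)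

noncomputable def monMul (a b : TMon n) : TMon n := (a.1 + b.1, a.2 + b.2)
def monDvd (a b : TMon n) : Prop := a.1 ≤ b.1 ∧ a.2 ≤ b.2
noncomputable def monDiv (a b : TMon n) : TMon n := (a.1 - b.1, a.2 - b.2)
noncomputable def monLcm (a b : TMon n) : TMon n := (max a.1 b.1, a.2 ⊔ b.2)

/-- The valuation-first term order: compare valuations first (a *smaller* valuation gives a
*larger* term), then exponents via the monomial order `mo`. -/
def termLT (mo : MonomialOrder (Fin n)) (a b : TMon n) : Prop :=
  b.1 < a.1 ∨ (a.1 = b.1 ∧ mo.toSyn a.2 < mo.toSyn b.2)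

def termLE (mo : MonomialOrder (Fin n)) (a b : TMon n) : Prop :=
  a = b ∨ termLT mo a b

/-- Order on `Option (TMon n)`, where `none` (the "monomial" of `0`) is smallest. -/
def optLT (mo : MonomialOrder (Fin n)) : Option (TMon n) → Option (TMon n) → Prop
  | none, none => False
  | none, some _ => True
  | some _, none => False
  | some a, some b => termLT mo a b

def optLE (mo : MonomialOrder (Fin n)) (a b : Option (TMon n)) : Prop :=
  a = b ∨ optLT mo a b

noncomputable def optMul (t : TMon n) : Option (TMon n) → Option (TMon n)
  | none => none
  | some a => some (monMul t a)

/-- `(a, i)` is (the monomial of) a term of `f`: the coefficient of `X^i` has valuation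
exactly `a`. -/
def IsTerm (π : O) (f : MvPowerSeries (Fin n) O) (m : TMon n) : Prop :=
  π ^ m.1 ∣ MvPowerSeries.coeff m.2 f ∧ ¬ π ^ (m.1 + 1) ∣ MvPowerSeries.coeff m.2 f

/-- `m` is the leading monomial of `f`. -/
def IsLM (π : O) (mo : MonomialOrder (Fin n)) (f : MvPowerSeries (Fin n) O) (m : TMon n) :
    Prop :=
  IsTerm π f m ∧ ∀ m', IsTerm π f m' → termLE mo m' m

/-- `s` is the leading monomial of `f`, with the convention `LM 0 = none`. -/
def IsLMopt (π : O) (mo : MonomialOrder (Fin n)) (f : MvPowerSeries (Fin n) O) :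
    Option (TMon n) → Prop
  | none => f = 0
  | some m => IsLM π mo f m

/-- All coefficients of `f` are divisible by `π^N`, i.e. `val f ≥ N`. -/
def DvdAll (π : O) (N : ℕ) (f : MvPowerSeries (Fin n) O) : Prop :=
  ∀ i, π ^ N ∣ MvPowerSeries.coeff i f

/-- The Gauss valuation of `f` is exactly `N`. -/
def ValEq (π : O) (f : MvPowerSeries (Fin n) O) (N : ℕ) : Prop :=
  DvdAll π N f ∧ ¬ DvdAll π (N + 1) f

/-- `G` is a Gröbner basis of the ideal `I` of the (integral) Tate algebra. -/
def IsGB (π : O) (mo : MonomialOrder (Fin n)) (G : Set (TateAlgebra n O π))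
    (I : Ideal (TateAlgebra n O π)) : Prop :=
  (∀ g ∈ G, g ∈ I) ∧
    ∀ f ∈ I, (f : MvPowerSeries (Fin n) O) ≠ 0 → ∀ mf,
      IsLM π mo (f : MvPowerSeries (Fin n) O) mf →
        ∃ g ∈ G, ∃ mg, IsLM π mo (g : MvPowerSeries (Fin n) O) mg ∧ monDvd mg mf

/-- The module `M = {(u,v) : u f - v ∈ I₀}`. -/
def SigMod {π : O} (I0 : Ideal (TateAlgebra n O π)) (f : TateAlgebra n O π) :
    Set (TateAlgebra n O π × TateAlgebra n O π) :=
  {p | p.1 * f - p.2 ∈ I0}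

/-- `p = (u₁,v₁)` is top-reducible by `q = (u₂,v₂)`. -/
def TopRed (π : O) (mo : MonomialOrder (Fin n))
    (p q : TateAlgebra n O π × TateAlgebra n O π) : Prop :=
  (q.2 = 0 ∧ ∃ mu mq, IsLM π mo (p.1 : MvPowerSeries (Fin n) O) mu ∧
      IsLM π mo (q.1 : MvPowerSeries (Fin n) O) mq ∧ monDvd mq mu)
  ∨ (p.2 ≠ 0 ∧ q.2 ≠ 0 ∧
      ∃ m1 m2, IsLM π mo (p.2 : MvPowerSeries (Fin n) O) m1 ∧
        IsLM π mo (q.2 : MvPowerSeries (Fin n) O) m2 ∧ monDvd m2 m1 ∧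
        ∃ s1 s2, IsLMopt π mo (p.1 : MvPowerSeries (Fin n) O) s1 ∧
          IsLMopt π mo (q.1 : MvPowerSeries (Fin n) O) s2 ∧
          optLE mo (optMul (monDiv m1 m2) s2) s1)

/-- `G` is a strong Gröbner basis of the module `M = SigMod I0 f`. -/
def IsSGB (π : O) (mo : MonomialOrder (Fin n)) (I0 : Ideal (TateAlgebra n O π))
    (f : TateAlgebra n O π) (G : Set (TateAlgebra n O π × TateAlgebra n O π)) : Prop :=
  G.Finite ∧ G ⊆ SigMod I0 f ∧
    ∀ p ∈ SigMod I0 f, p ≠ 0 → ∃ q ∈ G, TopRed π mo p q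

/-- `p` is covered by `q`. -/
def Covers (π : O) (mo : MonomialOrder (Fin n))
    (q p : TateAlgebra n O π × TateAlgebra n O π) : Prop :=
  ∃ mu mq, IsLM π mo (p.1 : MvPowerSeries (Fin n) O) mu ∧
    IsLM π mo (q.1 : MvPowerSeries (Fin n) O) mq ∧ monDvd mq mu ∧
    ∃ sv sp, IsLMopt π mo (q.2 : MvPowerSeries (Fin n) O) sv ∧
      IsLMopt π mo (p.2 : MvPowerSeries (Fin n) O) sp ∧
      optLT mo (optMul (monDiv mu mq) sv) sp

def CoveredBy (π : O) (mo : MonomialOrder (Fin n))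
    (p : TateAlgebra n O π × TateAlgebra n O π)
    (G : Set (TateAlgebra n O π × TateAlgebra n O π)) : Prop :=
  ∃ q ∈ G, Covers π mo q p

/-- The Tate series `π^a X^i`, as an element of the Tate algebra. -/
noncomputable def monTA (π : O) (m : TMon n) : TateAlgebra n O π :=
  ⟨MvPowerSeries.monomial m.2 (π ^ m.1), by
    intro N
    apply Set.Finite.subset (Set.finite_singleton m.2)
    intro i hi
    by_contra h
    rw [Set.mem_singleton_iff] at h
    apply hi
    rw [MvPowerSeries.coeff_monomial, if_neg h]
    exact Dvd.intro 0 (by simp)⟩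

noncomputable def smulPair (π : O) (m : TMon n) (p : TateAlgebra n O π × TateAlgebra n O π) :
    TateAlgebra n O π × TateAlgebra n O π :=
  (monTA π m * p.1, monTA π m * p.2)

/-- `r` is the J-pair of `(p, q)` (with `p` carrying the larger signature part). -/
def IsJPair (π : O) (mo : MonomialOrder (Fin n))
    (p q r : TateAlgebra n O π × TateAlgebra n O π) : Prop :=
  ∃ m1 m2, IsLM π mo (p.2 : MvPowerSeries (Fin n) O) m1 ∧
    IsLM π mo (q.2 : MvPowerSeries (Fin n) O) m2 ∧
    (∃ s1 s2, IsLMopt π mo (p.1 : MvPowerSeries (Fin n) O) s1 ∧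
      IsLMopt π mo (q.1 : MvPowerSeries (Fin n) O) s2 ∧
      optLT mo (optMul (monDiv (monLcm m1 m2) m2) s2)
        (optMul (monDiv (monLcm m1 m2) m1) s1)) ∧
    r = smulPair π (monDiv (monLcm m1 m2) m1) p

section Residue

variable {k : Type*} [Field k]

/-- `P = ρ(f)`, the reduction mod `π` of `π^{-val f} f`. -/
def IsRho (π : O) (φ : O →+* k) (f : MvPowerSeries (Fin n) O)
    (P : MvPolynomial (Fin n) k) : Prop :=
  ∃ (N : ℕ) (g : MvPowerSeries (Fin n) O), f = (π ^ N) • g ∧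
    (∃ i, ¬ π ∣ MvPowerSeries.coeff i g) ∧
    ∀ i, MvPolynomial.coeff i P = φ (MvPowerSeries.coeff i g)

def rhoSet (π : O) (φ : O →+* k) (S : Set (TateAlgebra n O π)) :
    Set (MvPolynomial (Fin n) k) :=
  {P | ∃ f ∈ S, IsRho π φ (f : MvPowerSeries (Fin n) O) P}

/-- `Ī_N`: the image in `k[X]` of `π^{-N} (I ∩ π^N K{X}°)`. -/
def BarIdeal (π : O) (φ : O →+* k) (I : Ideal (TateAlgebra n O π)) (N : ℕ) :
    Set (MvPolynomial (Fin n) k) :=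
  {P | ∃ f ∈ I, ∃ g : MvPowerSeries (Fin n) O, (f : MvPowerSeries (Fin n) O) = (π ^ N) • g ∧
    ∀ i, MvPolynomial.coeff i P = φ (MvPowerSeries.coeff i g)}

/-- `d` is the leading exponent of the polynomial `P` for the monomial order `mo`. -/
def IsPolyLM (mo : MonomialOrder (Fin n)) (P : MvPolynomial (Fin n) k)
    (d : Fin n →₀ ℕ) : Prop :=
  MvPolynomial.coeff d P ≠ 0 ∧ ∀ e, MvPolynomial.coeff e P ≠ 0 → mo.toSyn e ≤ mo.toSyn d

/-- `G` is a Gröbner basis of the set (ideal) `J` of polynomials over the residue field. -/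
def IsPolyGB (mo : MonomialOrder (Fin n)) (G : Set (MvPolynomial (Fin n) k))
    (J : Set (MvPolynomial (Fin n) k)) : Prop :=
  G ⊆ J ∧ ∀ P ∈ J, P ≠ 0 → ∀ d, IsPolyLM mo P d →
    ∃ Q ∈ G, ∃ e, IsPolyLM mo Q e ∧ e ≤ d

end Residue

end TateStmt


open TateStmt MvPowerSeries

variable {n : ℕ} {O : Type*} [CommRing O] [IsDomain O] [IsDiscreteValuationRing O]

/-- `Q_{≤N}`: the elements of `Q_all` of valuation at most `N`. -/
def Qle (π : O) (Qall : Set (TateAlgebra n O π)) (N : ℕ) : Set (TateAlgebra n O π) :=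
  {f ∈ Qall | ∃ M ≤ N, ValEq π (f : MvPowerSeries (Fin n) O) M}

/-- `Q_{>N}`: the elements of `Q_all` of valuation greater than `N`. -/
def Qgt (π : O) (Qall : Set (TateAlgebra n O π)) (N : ℕ) : Set (TateAlgebra n O π) :=
  {f ∈ Qall | ¬ ∃ M ≤ N, ValEq π (f : MvPowerSeries (Fin n) O) M}

/-- The set `π^a · S` for `S` a set of Tate series. -/
noncomputable def piPowMulSet (π : O) (a : ℕ) (S : Set (TateAlgebra n O π)) :
    Set (TateAlgebra n O π) :=
  (fun g => monTA π (a, 0) * g) '' S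

/-- The set `π^{-N} · S` (those `g` with `π^N g ∈ S`). -/
def piPowDivSet (π : O) (N : ℕ) (S : Set (TateAlgebra n O π)) :
    Set (TateAlgebra n O π) :=
  {g | ∃ f ∈ S, (f : MvPowerSeries (Fin n) O) =
    (π ^ N) • (g : MvPowerSeries (Fin n) O)}

section Aux16

variable (π : O)

lemma monTA_mul_coe (a : ℕ) (x : TateAlgebra n O π) :
    ((monTA π (a, 0) * x : TateAlgebra n O π) : MvPowerSeries (Fin n) O)
      = (π ^ a) • (x : MvPowerSeries (Fin n) O) := by
  show (MvPowerSeries.monomial (0 : Fin n →₀ ℕ) (π ^ a)) *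
      (x : MvPowerSeries (Fin n) O) = _
  rw [MvPowerSeries.monomial_zero_eq_C_apply]
  ext i
  rw [MvPowerSeries.coeff_C_mul, MvPowerSeries.coeff_smul]

lemma monTA_mul_monTA (a b : ℕ) :
    (monTA π (a, 0) * monTA π (b, 0) : TateAlgebra n O π) = monTA π (a + b, 0) := by
  apply Subtype.ext
  rw [monTA_mul_coe]
  show (π ^ a) • (MvPowerSeries.monomial (0 : Fin n →₀ ℕ) (π ^ b))
    = MvPowerSeries.monomial (0 : Fin n →₀ ℕ) (π ^ (a + b))
  rw [← map_smul, smul_eq_mul, ← pow_add]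

/-- `{x | val x ≥ a}` as an ideal of the Tate algebra. -/
def dvdIdeal (a : ℕ) : Ideal (TateAlgebra n O π) where
  carrier := {x | DvdAll π a (x : MvPowerSeries (Fin n) O)}
  zero_mem' := by intro i; simp
  add_mem' := by
    intro x y hx hy i
    rw [Subring.coe_add, map_add]
    exact dvd_add (hx i) (hy i)
  smul_mem' := by
    intro c x hx i
    show π ^ a ∣ MvPowerSeries.coeff i
      ((c : MvPowerSeries (Fin n) O) * (x : MvPowerSeries (Fin n) O))
    rw [MvPowerSeries.coeff_mul]
    exact Finset.dvd_sum fun p _ => Dvd.dvd.mul_left (hx p.2) _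

lemma mem_dvdIdeal {a : ℕ} {x : TateAlgebra n O π} :
    x ∈ dvdIdeal π a ↔ DvdAll π a (x : MvPowerSeries (Fin n) O) := Iff.rfl

lemma valEq_unique {f : MvPowerSeries (Fin n) O} {a b : ℕ}
    (ha : ValEq π f a) (hb : ValEq π f b) : a = b := by
  by_contra h
  rcases Nat.lt_or_ge a b with hlt | hge
  · exact ha.2 fun i => dvd_trans (pow_dvd_pow π hlt) (hb.1 i)
  · have hba : b < a := Nat.lt_of_le_of_ne hge (Ne.symm h)
    exact hb.2 fun i => dvd_trans (pow_dvd_pow π hba) (ha.1 i)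

lemma valEq_ne_zero {f : MvPowerSeries (Fin n) O} {a : ℕ}
    (ha : ValEq π f a) : f ≠ 0 := by
  intro hf
  exact ha.2 fun i => by simp [hf]

end Aux16

set_option maxHeartbeats 1000000 in
/-- Proposition, (b) at level `N` and (c) at level `N-1` imply (c) at
level `N`: if `φ_N(S_N) ⊆ ⟨π·ν(Q_{≤N}), π^{-N} Q_{>N}⟩` and
`I_N = ⟨π^N ν(Q_{≤N}), Q_{>N}⟩`, then `I_{N+1} = ⟨π^{N+1} ν(Q_{≤N+1}), Q_{>N+1}⟩`. -/
theorem statement_16 (π : O) (hπ : Irreducible π)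
    (I : Ideal (TateAlgebra n O π)) (Qall : Set (TateAlgebra n O π))
    (hQI : ∀ f ∈ Qall, f ∈ I)
    (nu : TateAlgebra n O π → TateAlgebra n O π)
    (hnu : ∀ f ∈ Qall, f ≠ 0 → ∃ N : ℕ, ValEq π (f : MvPowerSeries (Fin n) O) N ∧
      (f : MvPowerSeries (Fin n) O) = (π ^ N) • ((nu f : TateAlgebra n O π) :
        MvPowerSeries (Fin n) O))
    (N : ℕ)
    -- (b) at level N : `φ_N(S_N) ⊆ ⟨π·ν(Q_{≤N}), π^{-N} Q_{>N}⟩`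
    (hb : ∀ s : Finset (TateAlgebra n O π), ↑s ⊆ Qle π Qall N →
      ∀ a : TateAlgebra n O π → TateAlgebra n O π,
        DvdAll π 1 ((∑ f ∈ s, a f * nu f : TateAlgebra n O π) : MvPowerSeries (Fin n) O) →
        (∑ f ∈ s, a f * nu f) ∈
          Ideal.span (piPowMulSet π 1 (nu '' Qle π Qall N) ∪ piPowDivSet π N (Qgt π Qall N)))
    -- (c) at level N-1 : `I_N = ⟨π^N ν(Q_{≤N}), Q_{>N}⟩`
    (hc : {h : TateAlgebra n O π | h ∈ I ∧ DvdAll π N (h : MvPowerSeries (Fin n) O)} =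
      ((Ideal.span (piPowMulSet π N (nu '' Qle π Qall N) ∪ Qgt π Qall N) :
        Ideal (TateAlgebra n O π)) : Set (TateAlgebra n O π))) :
    -- (c) at level N : `I_{N+1} = ⟨π^{N+1} ν(Q_{≤N+1}), Q_{>N+1}⟩`
    {h : TateAlgebra n O π | h ∈ I ∧ DvdAll π (N + 1) (h : MvPowerSeries (Fin n) O)} =
      ((Ideal.span (piPowMulSet π (N + 1) (nu '' Qle π Qall (N + 1)) ∪ Qgt π Qall (N + 1)) :
        Ideal (TateAlgebra n O π)) : Set (TateAlgebra n O π)) := by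
  classical
  set J : Ideal (TateAlgebra n O π) :=
    Ideal.span (piPowMulSet π (N + 1) (nu '' Qle π Qall (N + 1)) ∪ Qgt π Qall (N + 1))
    with hJdef
  -- elements of Q_{>N} have valuation ≥ N+1
  have hgtDvd : ∀ g ∈ Qgt π Qall N, DvdAll π (N + 1) (g : MvPowerSeries (Fin n) O) := by
    intro g hg i
    by_cases hg0 : g = 0
    · subst hg0; simp
    obtain ⟨M, hval, -⟩ := hnu g hg.1 hg0
    have hM : ¬ M ≤ N := fun h => hg.2 ⟨M, h, hval⟩
    exact dvd_trans (pow_dvd_pow π (by omega)) (hval.1 i)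
  -- every element of Q_{>N} lies in J
  have hgtJ : ∀ g ∈ Qgt π Qall N, g ∈ J := by
    intro g hg
    by_cases hg1 : ∃ M ≤ N + 1, ValEq π (g : MvPowerSeries (Fin n) O) M
    · obtain ⟨M, hM, hval⟩ := hg1
      have hM' : M = N + 1 := by
        rcases Nat.lt_or_ge M (N + 1) with h | h
        · exact absurd ⟨M, Nat.lt_succ_iff.mp h, hval⟩ hg.2
        · omega
      subst hM'
      have hg0 : g ≠ 0 := by
        intro h
        exact valEq_ne_zero π hval (by rw [h]; rfl)
      obtain ⟨M', hval', heq⟩ := hnu g hg.1 hg0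
      have hMeq : M' = N + 1 := valEq_unique π hval' hval
      subst hMeq
      apply Ideal.subset_span
      left
      refine ⟨nu g, ⟨g, ⟨hg.1, N + 1, le_refl _, hval⟩, rfl⟩, ?_⟩
      exact Subtype.ext ((monTA_mul_coe π (N + 1) (nu g)).trans heq.symm)
    · exact Ideal.subset_span (Or.inr ⟨hg.1, hg1⟩)
  -- J is contained in I ⊓ dvdIdeal (N+1)
  have hJle : J ≤ I ⊓ dvdIdeal π (N + 1) := by
    rw [hJdef]
    apply Ideal.span_le.mpr
    rintro x (⟨y, ⟨f, hf, rfl⟩, rfl⟩ | hx)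
    · dsimp only
      obtain ⟨hfQ, M, hMle, hval⟩ := hf
      have hf0 : f ≠ 0 := by
        intro h
        exact valEq_ne_zero π hval (by rw [h]; rfl)
      obtain ⟨M', hval', heq⟩ := hnu f hfQ hf0
      have hMeq : M' = M := valEq_unique π hval' hval
      subst hMeq
      refine Submodule.mem_inf.mpr ⟨?_, ?_⟩
      · have key : (monTA π (N + 1, 0) : TateAlgebra n O π) * nu f
            = monTA π (N + 1 - M', 0) * f := by
          apply Subtype.ext
          rw [monTA_mul_coe, monTA_mul_coe, heq, smul_smul, ← pow_add]
          congr 2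
          omega
        rw [key]
        exact Ideal.mul_mem_left _ _ (hQI f hfQ)
      · intro i
        rw [monTA_mul_coe, MvPowerSeries.coeff_smul]
        exact Dvd.dvd.mul_right dvd_rfl _
    · have hx' : x ∈ Qgt π Qall N :=
        ⟨hx.1, fun ⟨M, hM, h⟩ => hx.2 ⟨M, le_trans hM (Nat.le_succ N), h⟩⟩
      exact Submodule.mem_inf.mpr ⟨hQI x hx.1, hgtDvd x hx'⟩
  ext x
  simp only [Set.mem_setOf_eq, SetLike.mem_coe]
  constructor
  · -- the hard inclusion
    rintro ⟨hxI, hxDvd⟩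
    have hxDvdN : DvdAll π N (x : MvPowerSeries (Fin n) O) :=
      fun i => dvd_trans (pow_dvd_pow π (Nat.le_succ N)) (hxDvd i)
    have hx2 : x ∈ Ideal.span (piPowMulSet π N (nu '' Qle π Qall N) ∪ Qgt π Qall N) := by
      have : x ∈ {h : TateAlgebra n O π | h ∈ I ∧
          DvdAll π N (h : MvPowerSeries (Fin n) O)} := ⟨hxI, hxDvdN⟩
      rw [hc] at this
      exact this
    obtain ⟨c, hsupp, hsum⟩ := Submodule.mem_span_set.mp hx2
    rw [Finsupp.sum] at hsum
    simp only [smul_eq_mul] at hsum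
    set U1 : Finset (TateAlgebra n O π) :=
      c.support.filter (fun t => t ∈ piPowMulSet π N (nu '' Qle π Qall N)) with hU1
    set U2 : Finset (TateAlgebra n O π) :=
      c.support.filter (fun t => ¬ t ∈ piPowMulSet π N (nu '' Qle π Qall N)) with hU2
    have hsplit : (∑ t ∈ U1, c t * t) + (∑ t ∈ U2, c t * t) = x := by
      rw [hU1, hU2, Finset.sum_filter_add_sum_filter_not]
      exact hsum
    have hU2gt : ∀ t ∈ U2, t ∈ Qgt π Qall N := by
      intro t ht
      rw [hU2, Finset.mem_filter] at ht
      rcases hsupp ht.1 with h | h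
      · exact absurd h ht.2
      · exact h
    have hsum2J : (∑ t ∈ U2, c t * t) ∈ J :=
      Ideal.sum_mem _ fun t ht => Ideal.mul_mem_left _ _ (hgtJ t (hU2gt t ht))
    have hsum2Dvd : (∑ t ∈ U2, c t * t) ∈ dvdIdeal π (N + 1) :=
      Ideal.sum_mem _ fun t ht =>
        Ideal.mul_mem_left _ (c t) ((mem_dvdIdeal π).mpr (hgtDvd t (hU2gt t ht)))
    -- selection function for the witnesses in U1
    have hU1w : ∀ t ∈ U1, ∃ f, f ∈ Qle π Qall N ∧ monTA π (N, 0) * nu f = t := by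
      intro t ht
      rw [hU1, Finset.mem_filter] at ht
      obtain ⟨y, ⟨f, hf, rfl⟩, rfl⟩ := ht.2
      exact ⟨f, hf, rfl⟩
    set fsel : TateAlgebra n O π → TateAlgebra n O π := fun t =>
      if h : ∃ f, f ∈ Qle π Qall N ∧ monTA π (N, 0) * nu f = t then h.choose else 0
      with hfsel
    have hsel : ∀ t ∈ U1, fsel t ∈ Qle π Qall N ∧ monTA π (N, 0) * nu (fsel t) = t := by
      intro t ht
      have h := hU1w t ht
      rw [hfsel]
      simp only [dif_pos h]
      exact h.choose_spec
    set s : Finset (TateAlgebra n O π) := U1.image fsel with hs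
    set a : TateAlgebra n O π → TateAlgebra n O π := fun f =>
      ∑ t ∈ U1.filter (fun t => fsel t = f), c t with ha
    have hSig : (∑ f ∈ s, a f * nu f) = ∑ t ∈ U1, c t * nu (fsel t) := by
      rw [hs, ha]
      calc ∑ f ∈ U1.image fsel, (∑ t ∈ U1.filter (fun t => fsel t = f), c t) * nu f
          = ∑ f ∈ U1.image fsel, ∑ t ∈ U1.filter (fun t => fsel t = f), c t * nu f := by
            refine Finset.sum_congr rfl fun f _ => ?_
            rw [Finset.sum_mul]
        _ = ∑ f ∈ U1.image fsel, ∑ t ∈ U1.filter (fun t => fsel t = f),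
              c t * nu (fsel t) := by
            refine Finset.sum_congr rfl fun f _ => Finset.sum_congr rfl fun t ht => ?_
            rw [(Finset.mem_filter.mp ht).2]
        _ = ∑ t ∈ U1, c t * nu (fsel t) :=
            Finset.sum_fiberwise_of_maps_to (fun t ht => Finset.mem_image_of_mem fsel ht) _
    have hsum1 : monTA π (N, 0) * (∑ f ∈ s, a f * nu f) = ∑ t ∈ U1, c t * t := by
      rw [hSig, Finset.mul_sum]
      refine Finset.sum_congr rfl fun t ht => ?_
      rw [mul_left_comm, (hsel t ht).2]
    have hsum1Dvd : (∑ t ∈ U1, c t * t) ∈ dvdIdeal π (N + 1) := by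
      have : (∑ t ∈ U1, c t * t) = x - ∑ t ∈ U2, c t * t := by
        rw [← hsplit]; ring
      rw [this]
      exact Submodule.sub_mem _ ((mem_dvdIdeal π).mpr hxDvd) hsum2Dvd
    have hSigDvd : DvdAll π 1 ((∑ f ∈ s, a f * nu f : TateAlgebra n O π) :
        MvPowerSeries (Fin n) O) := by
      intro i
      have h1 : π ^ (N + 1) ∣ MvPowerSeries.coeff i
          ((monTA π (N, 0) * (∑ f ∈ s, a f * nu f) : TateAlgebra n O π) :
            MvPowerSeries (Fin n) O) := by
        rw [hsum1]
        exact hsum1Dvd i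
      rw [monTA_mul_coe, MvPowerSeries.coeff_smul] at h1
      have hπN : (π : O) ^ N ≠ 0 := pow_ne_zero _ hπ.ne_zero
      rw [pow_succ] at h1
      rw [pow_one]
      exact (mul_dvd_mul_iff_left hπN).mp h1
    have hssub : (↑s : Set (TateAlgebra n O π)) ⊆ Qle π Qall N := by
      intro f hf
      rw [hs] at hf
      obtain ⟨t, ht, rfl⟩ := Finset.mem_coe.mp hf |> Finset.mem_image.mp
      exact (hsel t ht).1
    have hSigspan := hb s hssub a hSigDvd
    -- multiplying the span membership by π^N lands in J
    have hmul : ∀ y ∈ Ideal.span (piPowMulSet π 1 (nu '' Qle π Qall N) ∪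
        piPowDivSet π N (Qgt π Qall N)), monTA π (N, 0) * y ∈ J := by
      intro y hy
      induction hy using Submodule.span_induction with
      | mem z hz =>
        rcases hz with ⟨w, ⟨f, hf, rfl⟩, rfl⟩ | hz
        · rw [← mul_assoc, monTA_mul_monTA]
          apply Ideal.subset_span
          left
          refine ⟨nu f, ⟨f, ⟨hf.1, ?_⟩, rfl⟩, rfl⟩
          obtain ⟨M, hM, hval⟩ := hf.2
          exact ⟨M, le_trans hM (Nat.le_succ N), hval⟩
        · obtain ⟨g, hg, hgeq⟩ := hz
          have : (monTA π (N, 0) : TateAlgebra n O π) * z = g :=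
            Subtype.ext ((monTA_mul_coe π N z).trans hgeq.symm)
          rw [this]
          exact hgtJ g hg
      | zero => rw [mul_zero]; exact J.zero_mem
      | add y z hy hz ihy ihz => rw [mul_add]; exact J.add_mem ihy ihz
      | smul r y hy ihy =>
        rw [smul_eq_mul, ← mul_assoc, mul_comm (monTA π (N, 0)) r, mul_assoc]
        exact Ideal.mul_mem_left _ _ ihy
    have hsum1J : (∑ t ∈ U1, c t * t) ∈ J := by
      rw [← hsum1]
      exact hmul _ hSigspan
    rw [← hsplit]
    exact J.add_mem hsum1J hsum2J
  · intro hx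
    have h := hJle hx
    exact ⟨(Submodule.mem_inf.mp h).1, (Submodule.mem_inf.mp h).2⟩
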